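/- Let k, n be natural numbers with n ≥ 1 and k − 2n ≥ 1, and let A and B be defined as: A(b₁,b₂) = Σ_{i=0}^{n−1} (−1)^{i+n−1} (k−i−n−2)! b₁^{k−i−2} b₂^i / (i! (n−1−i)! (k−2n−1)! (k−i−2)!) and B(b₁,b₂) = Σ_{i=0}^{k−2n−1} (−1)^n (k−n−i−2)! (b₁−b₂)^{k−i−2} b₂^i / (i! (k−2n−1−i)! (n−1)! (k−i−2)!). Then for all real b₁ ≥ b₂ ≥ 0, A(b₁,b₂) + B(b₁,b₂) = A(b₂,b₁). -/

import Mathlib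

open Finset

noncomputable def Aa (ν μ : ℕ) (x y : ℝ) : ℝ :=
  ∑ i ∈ Finset.range (ν+1),
    (-1:ℝ)^(i+ν) * ((ν+μ-i).factorial : ℝ) * x^(2*ν+μ+1-i) * y^i /
      ((i.factorial : ℝ) * ((ν-i).factorial : ℝ) * (μ.factorial : ℝ) *
        ((2*ν+μ+1-i).factorial : ℝ))

noncomputable def Bb (ν μ : ℕ) (x y : ℝ) : ℝ :=
  ∑ i ∈ Finset.range (μ+1),
    (-1:ℝ)^(ν+1) * ((ν+μ-i).factorial : ℝ) * (x-y)^(2*ν+μ+1-i) * y^i /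
      ((i.factorial : ℝ) * ((μ-i).factorial : ℝ) * (ν.factorial : ℝ) *
        ((2*ν+μ+1-i).factorial : ℝ))

noncomputable def ca (ν μ i : ℕ) : ℝ :=
  (-1:ℝ)^(i+ν) * ((ν+μ-i).factorial : ℝ) /
      ((i.factorial : ℝ) * ((ν-i).factorial : ℝ) * (μ.factorial : ℝ) *
        ((2*ν+μ+1-i).factorial : ℝ))

noncomputable def cb (ν μ i : ℕ) : ℝ :=
  (-1:ℝ)^(ν+1) * ((ν+μ-i).factorial : ℝ) /
      ((i.factorial : ℝ) * ((μ-i).factorial : ℝ) * (ν.factorial : ℝ) *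
        ((2*ν+μ+1-i).factorial : ℝ))

lemma fact_ne (n : ℕ) : ((n.factorial : ℝ)) ≠ 0 := by
  exact_mod_cast n.factorial_ne_zero

lemma Aa_eq (ν μ : ℕ) (x y : ℝ) :
    Aa ν μ x y = ∑ i ∈ Finset.range (ν+1), ca ν μ i * (x^(2*ν+μ+1-i) * y^i) := by
  refine Finset.sum_congr rfl fun i _ => ?_
  unfold ca; ring

lemma Bb_eq (ν μ : ℕ) (x y : ℝ) :
    Bb ν μ x y = ∑ i ∈ Finset.range (μ+1), cb ν μ i * ((x-y)^(2*ν+μ+1-i) * y^i) := by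
  refine Finset.sum_congr rfl fun i _ => ?_
  unfold cb; ring

lemma fact_expand (a : ℕ) : ((a+1).factorial : ℝ) = ((a:ℝ)+1) * (a.factorial : ℝ) := by
  rw [Nat.factorial_succ]; push_cast; ring

lemma ca_rec (ν μ i : ℕ) (h : i < ν) :
    ca ν (μ+1) i * ((2*ν+μ+2-i : ℕ) : ℝ) + ca ν (μ+1) (i+1) * ((i:ℝ)+1) = ca ν μ i := by
  obtain ⟨d, rfl⟩ : ∃ d, ν = i + d + 1 := ⟨ν - i - 1, by omega⟩
  unfold ca
  rw [show (i+d+1)+(μ+1)-i = d+μ+2 from by omega,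
      show (i+d+1)-i = d+1 from by omega,
      show 2*(i+d+1)+μ+2-i = (i+2*d+μ+3)+1 from by omega,
      show 2*(i+d+1)+(μ+1)+1-i = (i+2*d+μ+3)+1 from by omega,
      show (i+d+1)+(μ+1)-(i+1) = d+μ+1 from by omega,
      show (i+d+1)-(i+1) = d from by omega,
      show 2*(i+d+1)+(μ+1)+1-(i+1) = i+2*d+μ+3 from by omega,
      show (i+d+1)+μ-i = d+μ+1 from by omega,
      show 2*(i+d+1)+μ+1-i = i+2*d+μ+3 from by omega,
      show i+1+(i+d+1) = (i+(i+d+1))+1 from by omega]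
  rw [show d+μ+2 = (d+μ+1)+1 from rfl, fact_expand (d+μ+1),
      fact_expand (i+2*d+μ+3), fact_expand μ, fact_expand d, fact_expand i,
      pow_succ]
  push_cast
  field_simp
  ring
lemma ca_top (ν μ : ℕ) :
    ca ν (μ+1) ν * ((ν:ℝ)+(μ:ℝ)+2) = ca ν μ ν := by
  unfold ca
  rw [show ν+(μ+1)-ν = μ+1 from by omega,
      show ν-ν = 0 from by omega,
      show 2*ν+(μ+1)+1-ν = (ν+μ+1)+1 from by omega,
      show ν+μ-ν = μ from by omega,
      show 2*ν+μ+1-ν = ν+μ+1 from by omega]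
  rw [fact_expand (ν+μ+1), fact_expand μ]
  push_cast
  field_simp
  ring

lemma cb_rec (ν μ i : ℕ) (h : i ≤ μ) :
    cb ν (μ+1) (i+1) * ((i:ℝ)+1) = cb ν μ i := by
  obtain ⟨d, rfl⟩ : ∃ d, μ = i + d := ⟨μ - i, by omega⟩
  unfold cb
  rw [show ν+(i+d+1)-(i+1) = ν+d from by omega,
      show (i+d+1)-(i+1) = d from by omega,
      show 2*ν+(i+d+1)+1-(i+1) = 2*ν+d+1 from by omega,
      show ν+(i+d)-i = ν+d from by omega,
      show (i+d)-i = d from by omega,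
      show 2*ν+(i+d)+1-i = 2*ν+d+1 from by omega]
  rw [fact_expand i]
  field_simp

lemma regroup (ν μ : ℕ) (x y : ℝ) :
    ∑ i ∈ Finset.range (ν+1), ca ν (μ+1) i *
      (((2*ν+(μ+1)+1-i : ℕ):ℝ) * x^(2*ν+(μ+1)+1-i-1) * y^i
        + x^(2*ν+(μ+1)+1-i) * ((i:ℝ) * y^(i-1)))
    = ∑ i ∈ Finset.range (ν+1), ca ν μ i * (x^(2*ν+μ+1-i) * y^i) := by
  have expand : ∀ i ∈ Finset.range (ν+1),
      ca ν (μ+1) i * (((2*ν+(μ+1)+1-i : ℕ):ℝ) * x^(2*ν+(μ+1)+1-i-1) * y^i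
        + x^(2*ν+(μ+1)+1-i) * ((i:ℝ) * y^(i-1)))
      = ca ν (μ+1) i * (((2*ν+μ+2-i : ℕ):ℝ) * (x^(2*ν+μ+1-i) * y^i))
        + ca ν (μ+1) i * ((i:ℝ) * (x^(2*ν+μ+2-i) * y^(i-1))) := by
    intro i hi
    simp only [Finset.mem_range] at hi
    rw [show 2*ν+(μ+1)+1-i-1 = 2*ν+μ+1-i from by omega,
        show 2*ν+(μ+1)+1-i = 2*ν+μ+2-i from by omega]
    ring
  rw [Finset.sum_congr rfl expand, Finset.sum_add_distrib]
  have h2 : ∑ i ∈ Finset.range (ν+1),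
      ca ν (μ+1) i * ((i:ℝ) * (x^(2*ν+μ+2-i) * y^(i-1)))
      = ∑ i ∈ Finset.range ν,
        ca ν (μ+1) (i+1) * (((i:ℝ)+1) * (x^(2*ν+μ+1-i) * y^i)) := by
    rw [Finset.sum_range_succ']
    simp only [Nat.cast_zero, zero_mul, mul_zero, add_zero, Nat.cast_add, Nat.cast_one]
    refine Finset.sum_congr rfl fun i _ => ?_
    rw [show 2*ν+μ+2-(i+1) = 2*ν+μ+1-i from by omega, show i+1-1 = i from by omega]
  rw [h2, Finset.sum_range_succ, Finset.sum_range_succ (fun i => ca ν μ i * (x^(2*ν+μ+1-i) * y^i))]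
  have h3 : ∑ i ∈ Finset.range ν,
      ca ν (μ+1) i * (((2*ν+μ+2-i : ℕ):ℝ) * (x^(2*ν+μ+1-i) * y^i))
      + ∑ i ∈ Finset.range ν,
        ca ν (μ+1) (i+1) * (((i:ℝ)+1) * (x^(2*ν+μ+1-i) * y^i))
      = ∑ i ∈ Finset.range ν, ca ν μ i * (x^(2*ν+μ+1-i) * y^i) := by
    rw [← Finset.sum_add_distrib]
    refine Finset.sum_congr rfl fun i hi => ?_
    simp only [Finset.mem_range] at hi
    linear_combination (x^(2*ν+μ+1-i) * y^i) * ca_rec ν μ i hi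
  have h4 : ca ν (μ+1) ν * (((2*ν+μ+2-ν : ℕ):ℝ) * (x^(2*ν+μ+1-ν) * y^ν))
      = ca ν μ ν * (x^(2*ν+μ+1-ν) * y^ν) := by
    have : ((2*ν+μ+2-ν : ℕ):ℝ) = (ν:ℝ)+(μ:ℝ)+2 := by
      rw [show 2*ν+μ+2-ν = ν+μ+2 from by omega]; push_cast; ring
    rw [this]
    linear_combination (x^(2*ν+μ+1-ν) * y^ν) * ca_top ν μ
  linarith [h3, h4]

lemma regroupB (ν μ : ℕ) (x y : ℝ) :
    ∑ i ∈ Finset.range (μ+2), cb ν (μ+1) i * (x^(2*ν+(μ+1)+1-i) * ((i:ℝ) * y^(i-1)))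
    = ∑ i ∈ Finset.range (μ+1), cb ν μ i * (x^(2*ν+μ+1-i) * y^i) := by
  rw [Finset.sum_range_succ']
  simp only [Nat.cast_zero, zero_mul, mul_zero, add_zero, Nat.cast_add, Nat.cast_one]
  refine Finset.sum_congr rfl fun i hi => ?_
  simp only [Finset.mem_range] at hi
  rw [show 2*ν+(μ+1)+1-(i+1) = 2*ν+μ+1-i from by omega, show i+1-1 = i from by omega]
  linear_combination (x^(2*ν+μ+1-i) * y^i) * cb_rec ν μ i (by omega)

lemma hasDerivAt_Aa (ν μ : ℕ) (c t : ℝ) :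
    HasDerivAt (fun s => Aa ν (μ+1) (c+s) s) (Aa ν μ (c+t) t) t := by
  have hfun : (fun s : ℝ => Aa ν (μ+1) (c+s) s)
      = fun s : ℝ => ∑ i ∈ Finset.range (ν+1),
          ca ν (μ+1) i * ((c+s)^(2*ν+(μ+1)+1-i) * s^i) := funext fun s => Aa_eq ν (μ+1) (c+s) s
  rw [hfun, Aa_eq, ← regroup ν μ (c+t) t]
  refine HasDerivAt.fun_sum fun i _ => ?_
  have h1 : HasDerivAt (fun s : ℝ => (c+s)^(2*ν+(μ+1)+1-i))
      (((2*ν+(μ+1)+1-i : ℕ):ℝ) * (c+t)^(2*ν+(μ+1)+1-i-1)) t := by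
    simpa [Function.comp_def] using ((hasDerivAt_pow (2*ν+(μ+1)+1-i) (c+t)).comp t
      ((hasDerivAt_id t).const_add c))
  exact (h1.mul (hasDerivAt_pow i t)).const_mul _

lemma hasDerivAt_Aa' (ν μ : ℕ) (c t : ℝ) :
    HasDerivAt (fun s => Aa ν (μ+1) s (c+s)) (Aa ν μ t (c+t)) t := by
  have hfun : (fun s : ℝ => Aa ν (μ+1) s (c+s))
      = fun s : ℝ => ∑ i ∈ Finset.range (ν+1),
          ca ν (μ+1) i * (s^(2*ν+(μ+1)+1-i) * (c+s)^i) := funext fun s => Aa_eq ν (μ+1) s (c+s)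
  rw [hfun, Aa_eq, ← regroup ν μ t (c+t)]
  refine HasDerivAt.fun_sum fun i _ => ?_
  have h2 : HasDerivAt (fun s : ℝ => (c+s)^i) ((i:ℝ) * (c+t)^(i-1)) t := by
    simpa [Function.comp_def] using ((hasDerivAt_pow i (c+t)).comp t ((hasDerivAt_id t).const_add c))
  exact ((hasDerivAt_pow (2*ν+(μ+1)+1-i) t).mul h2).const_mul _

lemma hasDerivAt_Bb (ν μ : ℕ) (c t : ℝ) :
    HasDerivAt (fun s => Bb ν (μ+1) (c+s) s) (Bb ν μ (c+t) t) t := by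
  have hfun : (fun s : ℝ => Bb ν (μ+1) (c+s) s)
      = fun s : ℝ => ∑ i ∈ Finset.range (μ+2),
          cb ν (μ+1) i * (c^(2*ν+(μ+1)+1-i) * s^i) := by
    funext s
    rw [Bb_eq]
    simp only [add_sub_cancel_right]
  have htarget : Bb ν μ (c+t) t
      = ∑ i ∈ Finset.range (μ+2), cb ν (μ+1) i * (c^(2*ν+(μ+1)+1-i) * ((i:ℝ) * t^(i-1))) := by
    rw [Bb_eq, add_sub_cancel_right, ← regroupB ν μ c t]
  rw [hfun, htarget]
  refine HasDerivAt.fun_sum fun i _ => ?_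
  exact ((hasDerivAt_pow i t).const_mul _).const_mul _

lemma boundary (ν M : ℕ) (c : ℝ) : Aa ν M c 0 + Bb ν M c 0 = Aa ν M 0 c := by
  have hA0 : Aa ν M 0 c = 0 := by
    unfold Aa
    refine Finset.sum_eq_zero fun i hi => ?_
    simp only [Finset.mem_range] at hi
    rw [zero_pow (by omega : 2*ν+M+1-i ≠ 0)]
    simp
  have hA : Aa ν M c 0
      = (-1:ℝ)^(0+ν) * ((ν+M-0).factorial : ℝ) * c^(2*ν+M+1-0) * (0:ℝ)^0 /
        (((0:ℕ).factorial : ℝ) * ((ν-0).factorial : ℝ) * (M.factorial : ℝ) *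
          ((2*ν+M+1-0).factorial : ℝ)) := by
    unfold Aa
    refine Finset.sum_eq_single_of_mem 0 (by simp) fun i _ hi => ?_
    rw [zero_pow hi]
    simp
  have hB : Bb ν M c 0
      = (-1:ℝ)^(ν+1) * ((ν+M-0).factorial : ℝ) * (c-0)^(2*ν+M+1-0) * (0:ℝ)^0 /
        (((0:ℕ).factorial : ℝ) * ((M-0).factorial : ℝ) * (ν.factorial : ℝ) *
          ((2*ν+M+1-0).factorial : ℝ)) := by
    unfold Bb
    refine Finset.sum_eq_single_of_mem 0 (by simp) fun i _ hi => ?_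
    rw [zero_pow hi]
    simp
  rw [hA, hB, hA0]
  simp only [Nat.sub_zero, pow_zero, sub_zero, Nat.factorial_zero, Nat.cast_one, zero_add,
    pow_succ]
  ring

lemma base (ν : ℕ) (x y : ℝ) : Aa ν 0 x y + Bb ν 0 x y = Aa ν 0 y x := by
  have hch : ∀ j : ℕ, j ≤ 2*ν+1 → (((2*ν+1).choose j : ℕ):ℝ)
      = ((2*ν+1).factorial : ℝ) / ((j.factorial : ℝ) * ((2*ν+1-j).factorial : ℝ)) := by
    intro j hj
    rw [eq_div_iff (mul_ne_zero (fact_ne j) (fact_ne _)), ← mul_assoc]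
    exact_mod_cast Nat.choose_mul_factorial_mul_factorial hj
  have hsplit : Bb ν 0 x y =
      (∑ j ∈ Finset.range (ν+1),
        cb ν 0 0 * (x^j * (-y)^(2*ν+1-j) * (((2*ν+1).choose j : ℕ):ℝ)))
      + ∑ j ∈ Finset.range (ν+1),
        cb ν 0 0 * (x^(ν+1+j) * (-y)^(2*ν+1-(ν+1+j)) * (((2*ν+1).choose (ν+1+j) : ℕ):ℝ)) := by
    have e1 : Bb ν 0 x y = cb ν 0 0 * (x-y)^(2*ν+1) := by
      rw [Bb_eq]
      simp
    have e2 : (x-y)^(2*ν+1)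
        = ∑ j ∈ Finset.range (2*ν+1+1), x^j * (-y)^(2*ν+1-j) * (((2*ν+1).choose j : ℕ):ℝ) := by
      rw [show x - y = x + (-y) from by ring, add_pow]
    rw [e1, e2, Finset.mul_sum, show 2*ν+1+1 = (ν+1)+(ν+1) from by omega,
      Finset.sum_range_add]
  have hfirst : (∑ j ∈ Finset.range (ν+1),
      cb ν 0 0 * (x^j * (-y)^(2*ν+1-j) * (((2*ν+1).choose j : ℕ):ℝ))) = Aa ν 0 y x := by
    unfold Aa cb
    refine Finset.sum_congr rfl fun j hj => ?_
    simp only [Finset.mem_range] at hj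
    rw [hch j (by omega)]
    rw [show ν+0-j = ν-j from by omega, show 2*ν+0+1-j = 2*ν+1-j from by omega,
        show ν+0-0 = ν from by omega, show (0:ℕ)-0 = 0 from rfl,
        show 2*ν+0+1-0 = 2*ν+1 from by omega]
    have hneg : (-y)^(2*ν+1-j) = (-1:ℝ)^(2*ν+1-j) * y^(2*ν+1-j) := by
      rw [neg_pow]
    have hsgn : (-1:ℝ)^(2*ν+1-j) = -(-1:ℝ)^j := by
      have : (-1:ℝ)^(2*ν+1-j) * (-1:ℝ)^(2*j) = (-1:ℝ)^(2*ν+1+j) := by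
        rw [← pow_add]
        congr 1
        omega
      have h2 : (-1:ℝ)^(2*j) = 1 := by rw [pow_mul]; norm_num
      have h3 : (-1:ℝ)^(2*ν+1+j) = -(-1:ℝ)^j := by
        rw [pow_add, pow_add, pow_mul]; norm_num
      rw [h2, mul_one] at this
      rw [this, h3]
    rw [hneg, hsgn]
    simp only [Nat.factorial_zero, Nat.cast_one]
    field_simp
    ring
  have hsecond : (∑ j ∈ Finset.range (ν+1),
      cb ν 0 0 * (x^(ν+1+j) * (-y)^(2*ν+1-(ν+1+j)) * (((2*ν+1).choose (ν+1+j) : ℕ):ℝ)))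
      = - Aa ν 0 x y := by
    rw [← Finset.sum_range_reflect]
    unfold Aa
    rw [← Finset.sum_neg_distrib]
    refine Finset.sum_congr rfl fun j hj => ?_
    simp only [Finset.mem_range] at hj
    rw [show ν+1+(ν+1-1-j) = 2*ν+1-j from by omega,
        show 2*ν+1-(2*ν+1-j) = j from by omega,
        Nat.choose_symm (show j ≤ 2*ν+1 from by omega),
        hch j (by omega)]
    unfold cb
    rw [show ν+0-j = ν-j from by omega, show 2*ν+0+1-j = 2*ν+1-j from by omega,
        show ν+0-0 = ν from by omega, show (0:ℕ)-0 = 0 from rfl,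
        show 2*ν+0+1-0 = 2*ν+1 from by omega]
    have hneg : (-y)^j = (-1:ℝ)^j * y^j := by rw [neg_pow]
    rw [hneg]
    simp only [Nat.factorial_zero, Nat.cast_one]
    field_simp
    ring
  rw [hsplit, hfirst, hsecond]
  ring

lemma key (ν μ : ℕ) (x y : ℝ) : Aa ν μ x y + Bb ν μ x y = Aa ν μ y x := by
  induction μ generalizing x y with
  | zero => exact base ν x y
  | succ μ ih =>
    set c := x - y with hc
    have hg : ∀ t : ℝ, HasDerivAt
        (fun s => Aa ν (μ+1) (c+s) s + Bb ν (μ+1) (c+s) s - Aa ν (μ+1) s (c+s)) 0 t := by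
      intro t
      have h := ((hasDerivAt_Aa ν μ c t).add (hasDerivAt_Bb ν μ c t)).sub
        (hasDerivAt_Aa' ν μ c t)
      have hz : Aa ν μ (c+t) t + Bb ν μ (c+t) t - Aa ν μ t (c+t) = 0 := by
        rw [ih (c+t) t]; ring
      rwa [hz] at h
    have hconst := is_const_of_deriv_eq_zero
      (fun t => (hg t).differentiableAt) (fun t => (hg t).deriv) y 0
    have h0 : Aa ν (μ+1) (c+0) 0 + Bb ν (μ+1) (c+0) 0 - Aa ν (μ+1) 0 (c+0) = 0 := by
      rw [add_zero]
      have := boundary ν (μ+1) c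
      linarith
    have hy : c + y = x := by rw [hc]; ring
    simp only [hy] at hconst
    rw [h0] at hconst
    linarith [hconst]

theorem diagonal_symmetry (k n : ℕ) (hn : 1 ≤ n) (hk : 1 ≤ k - 2*n)
    (b₁ b₂ : ℝ) (hb₂ : 0 ≤ b₂) (hb : b₂ ≤ b₁) :
    (∑ i ∈ Finset.range n,
        (-1:ℝ)^(i+n-1) * ((k-i-n-2).factorial : ℝ) * b₁^(k-i-2) * b₂^i /
          ((i.factorial : ℝ) * ((n-1-i).factorial : ℝ) *
            ((k-2*n-1).factorial : ℝ) * ((k-i-2).factorial : ℝ))) +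
      (∑ i ∈ Finset.range (k-2*n),
        (-1:ℝ)^n * ((k-n-i-2).factorial : ℝ) * (b₁-b₂)^(k-i-2) * b₂^i /
          ((i.factorial : ℝ) * ((k-2*n-1-i).factorial : ℝ) *
            ((n-1).factorial : ℝ) * ((k-i-2).factorial : ℝ))) =
      ∑ i ∈ Finset.range n,
        (-1:ℝ)^(i+n-1) * ((k-i-n-2).factorial : ℝ) * b₂^(k-i-2) * b₁^i /
          ((i.factorial : ℝ) * ((n-1-i).factorial : ℝ) *
            ((k-2*n-1).factorial : ℝ) * ((k-i-2).factorial : ℝ)) := by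
  obtain ⟨ν, rfl⟩ : ∃ ν, n = ν + 1 := ⟨n-1, by omega⟩
  obtain ⟨μ, rfl⟩ : ∃ μ, k = 2*ν+μ+3 := ⟨k-2*ν-3, by omega⟩
  have H := key ν μ b₁ b₂
  convert H using 2
  · unfold Aa
    refine Finset.sum_congr rfl fun i _ => ?_
    rw [show i+(ν+1)-1 = i+ν from by omega,
        show 2*ν+μ+3-i-(ν+1)-2 = ν+μ-i from by omega,
        show 2*ν+μ+3-i-2 = 2*ν+μ+1-i from by omega,
        show ν+1-1-i = ν-i from by omega,
        show 2*ν+μ+3-2*(ν+1)-1 = μ from by omega]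
  · unfold Bb
    rw [show 2*ν+μ+3-2*(ν+1) = μ+1 from by omega]
    refine Finset.sum_congr rfl fun i _ => ?_
    rw [show 2*ν+μ+3-(ν+1)-i-2 = ν+μ-i from by omega,
        show 2*ν+μ+3-i-2 = 2*ν+μ+1-i from by omega,
        show μ+1-1-i = μ-i from by omega,
        show ν+1-1 = ν from by omega]
  · unfold Aa
    refine Finset.sum_congr rfl fun i _ => ?_
    rw [show i+(ν+1)-1 = i+ν from by omega,
        show 2*ν+μ+3-i-(ν+1)-2 = ν+μ-i from by omega,
        show 2*ν+μ+3-i-2 = 2*ν+μ+1-i from by omega,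
        show ν+1-1-i = ν-i from by omega,
        show 2*ν+μ+3-2*(ν+1)-1 = μ from by omega]
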